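/- For all integers m ≥ 0 and n ≥ 0, the rational function h_m(v) is regular at v = 0 and its n-th Taylor coefficient at v = 0 equals (n!·(n+2k−1)!/(2k−1)!) times the coefficient of u^m in P_n(u). Equivalently, the double series identity ∑_{n≥0} (n!(n+2k−1)!/(2k−1)!)·P_n(u)·v^n = ∑_{m≥0} h_m(v)·u^m holds coefficientwise. -/

import Mathlib

open Polynomial

noncomputable section

/-- Derivative of a rational function. -/
def ratDeriv (f : RatFunc ℂ) : RatFunc ℂ :=
  RatFunc.mk (Polynomial.derivative f.num * f.denom - f.num * Polynomial.derivative f.denom)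
    (f.denom ^ 2)

open HahnSeries

abbrev L := LaurentSeries ℂ

/-- multiply coefficient i by i -/
def zmul (F : L) : L :=
  ⟨fun i => (i : ℂ) * F.coeff i, F.isPWO_support'.mono (by
    intro i hi
    simp only [Function.mem_support] at hi ⊢
    exact fun h => hi (by rw [h, mul_zero]))⟩

def lderiv (F : L) : L := (HahnSeries.single (-1 : ℤ) (1 : ℂ)) * zmul F

lemma zmul_coeff (F : L) (i : ℤ) : (zmul F).coeff i = (i : ℂ) * F.coeff i := rfl

lemma lderiv_coeff (F : L) (i : ℤ) :
    (lderiv F).coeff i = ((i + 1 : ℤ) : ℂ) * F.coeff (i + 1) := by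
  have : i = (i + 1) + (-1) := by ring
  rw [lderiv]
  conv_lhs => rw [this]
  rw [HahnSeries.coeff_single_mul_add, one_mul, zmul_coeff]

lemma mul_single_coeff (F : L) (b : ℤ) (r : ℂ) (i : ℤ) :
    (F * single b r).coeff i = F.coeff (i - b) * r := by
  have : i = (i - b) + b := by ring
  conv_lhs => rw [this]
  rw [HahnSeries.coeff_mul_single_add]

lemma lderiv_add (F G : L) : lderiv (F + G) = lderiv F + lderiv G := by
  ext i
  simp only [lderiv_coeff, HahnSeries.coeff_add]
  ring

def polL (p : Polynomial ℂ) : L := ((p : PowerSeries ℂ) : L)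

lemma polL_coeff (p : Polynomial ℂ) (i : ℤ) :
    (polL p).coeff i = if i < 0 then 0 else p.coeff i.natAbs := by
  rw [polL, PowerSeries.coeff_coe]
  simp [Polynomial.coeff_coe]

lemma polL_add (p q : Polynomial ℂ) : polL (p + q) = polL p + polL q := by
  rw [polL, Polynomial.coe_add, PowerSeries.coe_add]; rfl

lemma polL_mul (p q : Polynomial ℂ) : polL (p * q) = polL p * polL q := by
  rw [polL, Polynomial.coe_mul, PowerSeries.coe_mul]; rfl

lemma polL_sub (p q : Polynomial ℂ) : polL (p - q) = polL p - polL q := by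
  rw [polL, Polynomial.coe_sub, PowerSeries.coe_sub]; rfl

lemma polL_monomial (n : ℕ) (a : ℂ) :
    polL (Polynomial.monomial n a) = single (n : ℤ) a := by
  ext i
  rw [polL_coeff, HahnSeries.coeff_single, Polynomial.coeff_monomial]
  split_ifs with h1 h2 h3 h4 h5 <;> try rfl
  · omega
  · omega
  · omega

lemma polL_eq_zero_iff (p : Polynomial ℂ) : polL p = 0 ↔ p = 0 := by
  constructor
  · intro hp
    ext n
    have := congrArg (fun F : L => F.coeff (n : ℤ)) hp
    simpa [polL_coeff] using this
  · rintro rfl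
    rw [polL]; simp

lemma lderiv_mul_single (F : L) (j : ℤ) (c : ℂ) :
    lderiv (F * single j c) = lderiv F * single j c + F * single (j - 1) ((j : ℂ) * c) := by
  ext i
  rw [HahnSeries.coeff_add, lderiv_coeff, mul_single_coeff, mul_single_coeff, lderiv_coeff,
    mul_single_coeff]
  have e1 : i + 1 - j = i - j + 1 := by ring
  have e2 : i - (j - 1) = i - j + 1 := by ring
  rw [e1, e2]
  push_cast
  ring

lemma lderiv_mul_polL (p : Polynomial ℂ) (F : L) :
    lderiv (F * polL p) = lderiv F * polL p + F * polL (Polynomial.derivative p) := by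
  induction p using Polynomial.induction_on' with
  | add p q hp hq =>
    rw [polL_add, mul_add, lderiv_add, hp, hq, map_add, polL_add]
    ring
  | monomial n a =>
    rw [polL_monomial, lderiv_mul_single, Polynomial.derivative_monomial, polL_monomial]
    cases n with
    | zero => simp [HahnSeries.single_eq_zero]
    | succ n' =>
      have e : ((n' + 1 : ℕ) : ℤ) - 1 = (n' : ℤ) := by push_cast; ring
      rw [Nat.succ_sub_one, e]
      norm_num [mul_comm]

lemma lderiv_one : lderiv (1 : L) = 0 := by
  ext i
  rw [lderiv_coeff, HahnSeries.coeff_one]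
  rcases eq_or_ne (i + 1) 0 with h | h
  · rw [h]; simp
  · simp [h]

lemma lderiv_polL (p : Polynomial ℂ) : lderiv (polL p) = polL (Polynomial.derivative p) := by
  have := lderiv_mul_polL p 1
  simpa [lderiv_one] using this

lemma coe_algebraMap_polL (p : Polynomial ℂ) :
    ((algebraMap (Polynomial ℂ) (RatFunc ℂ) p : RatFunc ℂ) : L) = polL p :=
  (RatFunc.coe_coe p).symm

lemma coe_num_denom' (f : RatFunc ℂ) : (f : L) = polL f.num / polL f.denom := by
  conv_lhs => rw [← RatFunc.num_div_denom f]
  rw [map_div₀, coe_algebraMap_polL, coe_algebraMap_polL]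

lemma ratDeriv_coe (f : RatFunc ℂ) : ((ratDeriv f : RatFunc ℂ) : L) = lderiv (f : L) := by
  have hD : f.denom ≠ 0 := f.denom_ne_zero
  have hDL : polL f.denom ≠ 0 := by
    rw [ne_eq, polL_eq_zero_iff]; exact hD
  have h1 : (f : L) * polL f.denom = polL f.num := by
    rw [coe_num_denom', div_mul_cancel₀ _ hDL]
  have h2 := congrArg lderiv h1
  rw [lderiv_mul_polL, lderiv_polL] at h2
  have h3 : lderiv (f : L) * polL f.denom ^ 2 =
      polL (Polynomial.derivative f.num) * polL f.denom
        - polL f.num * polL (Polynomial.derivative f.denom) := by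
    linear_combination (polL f.denom) * h2 - (polL (Polynomial.derivative f.denom)) * h1
  have h4 : ((ratDeriv f : RatFunc ℂ) : L) * polL f.denom ^ 2 =
      polL (Polynomial.derivative f.num) * polL f.denom
        - polL f.num * polL (Polynomial.derivative f.denom) := by
    rw [ratDeriv, RatFunc.mk_eq_div, map_div₀, coe_algebraMap_polL, coe_algebraMap_polL,
      polL_sub, polL_mul, polL_mul]
    have : polL (f.denom ^ 2) = polL f.denom ^ 2 := by
      rw [pow_two, pow_two, polL_mul]
    rw [this, div_mul_cancel₀ _ (pow_ne_zero 2 hDL)]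
  exact mul_right_cancel₀ (pow_ne_zero 2 hDL) (h4.trans h3.symm)

lemma coeff_div_X (f : RatFunc ℂ) (j : ℤ) :
    ((f / RatFunc.X : RatFunc ℂ) : L).coeff j = (f : L).coeff (j + 1) := by
  rw [map_div₀, RatFunc.coe_X, div_eq_mul_inv, HahnSeries.inv_single,
    inv_one, mul_single_coeff, mul_one]
  norm_num

lemma coe_C' (c : ℂ) : ((RatFunc.C c : RatFunc ℂ) : L) = HahnSeries.C c := by
  rw [← RatFunc.algebraMap_C, coe_algebraMap_polL, polL, Polynomial.coe_C, PowerSeries.coe_C]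

lemma coeff_smul' (c : ℂ) (f : RatFunc ℂ) (j : ℤ) :
    ((c • f : RatFunc ℂ) : L).coeff j = c * (f : L).coeff j := by
  rw [Algebra.smul_def, RatFunc.algebraMap_eq_C, map_mul, coe_C',
    HahnSeries.C_mul_eq_smul, HahnSeries.coeff_smul, smul_eq_mul]

lemma coeff_X_mul' (f : RatFunc ℂ) (j : ℤ) :
    ((RatFunc.X * f : RatFunc ℂ) : L).coeff j = (f : L).coeff (j - 1) := by
  rw [map_mul, RatFunc.coe_X, mul_comm, mul_single_coeff, mul_one]

lemma coeff_ratDeriv (f : RatFunc ℂ) (j : ℤ) :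
    ((ratDeriv f : RatFunc ℂ) : L).coeff j = ((j + 1 : ℤ) : ℂ) * (f : L).coeff (j + 1) := by
  rw [ratDeriv_coe, lderiv_coeff]

lemma coeff_X_mul_ratDeriv (f : RatFunc ℂ) (j : ℤ) :
    ((RatFunc.X * ratDeriv f : RatFunc ℂ) : L).coeff j = (j : ℂ) * (f : L).coeff j := by
  rw [coeff_X_mul', coeff_ratDeriv]
  norm_num

lemma master (f g : RatFunc ℂ) (α β γ : ℂ) (c : ℂ)
    (E : f / RatFunc.X - α • f + β • g - RatFunc.X * ratDeriv g
        + γ • (RatFunc.X * ratDeriv (RatFunc.X * g))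
        + (1/4 : ℂ) • (RatFunc.X * ratDeriv (RatFunc.X * ratDeriv (RatFunc.X * g)))
      = RatFunc.C c / RatFunc.X) (j : ℤ) :
    (f : L).coeff (j + 1) - α * (f : L).coeff j + β * (g : L).coeff j
        - (j : ℂ) * (g : L).coeff j
        + γ * ((j : ℂ) * (g : L).coeff (j - 1))
        + (1/4 : ℂ) * ((j : ℂ) * ((j : ℂ) * (g : L).coeff (j - 1)))
      = if j + 1 = 0 then c else 0 := by
  have H := congrArg (fun q : RatFunc ℂ => ((q : L)).coeff j) E
  simp only [map_add, map_sub, HahnSeries.coeff_add, HahnSeries.coeff_sub] at H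
  rw [coeff_div_X, coeff_smul', coeff_smul', coeff_smul', coeff_smul',
    coeff_X_mul_ratDeriv, coeff_X_mul_ratDeriv, coeff_X_mul_ratDeriv,
    coeff_X_mul', coeff_X_mul_ratDeriv, coeff_X_mul', coeff_div_X, coe_C'] at H
  rw [HahnSeries.C_apply, HahnSeries.coeff_single] at H
  convert H using 2

lemma coeff_X2_deriv (p : Polynomial ℂ) (m' : ℕ) :
    (Polynomial.X ^ 2 * Polynomial.derivative p).coeff (m' + 1) = (m' : ℂ) * p.coeff m' := by
  rw [pow_two, mul_assoc, Polynomial.coeff_X_mul]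
  cases m' with
  | zero => simp [Polynomial.mul_coeff_zero]
  | succ t => rw [Polynomial.coeff_X_mul, Polynomial.coeff_derivative]; push_cast; ring

lemma PnCoeff (kc : ℂ) (pnext p pprev : Polynomial ℂ) (n m' : ℕ)
    (E : (((n : ℂ) + 1) * ((n : ℂ) + 2 * kc)) • pnext
        + (Polynomial.X ^ 2 - Polynomial.X) * Polynomial.derivative p
        - ((n : ℂ) + kc) • (Polynomial.X * p)
        + (1/4 : ℂ) • (Polynomial.X * pprev) = 0) :
    ((n : ℂ) + 1) * ((n : ℂ) + 2 * kc) * pnext.coeff (m' + 1)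
      + ((m' : ℂ) * p.coeff m' - p.coeff (m' + 1) * ((m' : ℂ) + 1))
      - ((n : ℂ) + kc) * p.coeff m'
      + (1/4 : ℂ) * pprev.coeff m' = 0 := by
  have H := congrArg (fun q : Polynomial ℂ => q.coeff (m' + 1)) E
  simp only [Polynomial.coeff_add, Polynomial.coeff_sub, Polynomial.coeff_smul,
    Polynomial.coeff_zero, smul_eq_mul, sub_mul, Polynomial.coeff_X_mul] at H
  rw [coeff_X2_deriv, Polynomial.coeff_derivative] at H
  convert H using 2 <;> push_cast <;> ring

def cc (k n : ℕ) : ℂ :=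
  (Nat.factorial n : ℂ) * (Nat.factorial (n + 2 * k - 1) : ℂ) /
    (Nat.factorial (2 * k - 1) : ℂ)

lemma cc_zero (k : ℕ) : cc k 0 = 1 := by
  rw [cc]
  have h0 : (0 : ℕ) + 2 * k - 1 = 2 * k - 1 := by omega
  rw [h0, Nat.factorial_zero]
  have : ((2 * k - 1).factorial : ℂ) ≠ 0 := by
    exact_mod_cast Nat.factorial_ne_zero _
  field_simp
  norm_num

lemma cc_step (k n : ℕ) (hk : 1 ≤ k) :
    cc k (n + 1) = ((n : ℂ) + 1) * ((n : ℂ) + 2 * k) * cc k n := by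
  rw [cc, cc]
  have h1 : n + 1 + 2 * k - 1 = (n + 2 * k - 1) + 1 := by omega
  rw [h1, Nat.factorial_succ, Nat.factorial_succ]
  have h2 : ((n + 2 * k - 1 : ℕ) : ℂ) = (n : ℂ) + 2 * k - 1 := by
    have e : (n + 2 * k - 1) + 1 = n + 2 * k := by omega
    have := congrArg (fun t : ℕ => (t : ℂ)) e
    push_cast at this
    linear_combination this
  push_cast
  rw [h2]
  ring

lemma Pn_coeff0 (k : ℕ) (hk : 1 ≤ k) (Pn : ℕ → Polynomial ℂ)
    (hPnrec : ∀ n : ℕ,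
      (((n : ℂ) + 1) * ((n : ℂ) + 2 * k)) • Pn (n + 1)
        + (Polynomial.X ^ 2 - Polynomial.X) * Polynomial.derivative (Pn n)
        - ((n : ℂ) + k) • (Polynomial.X * Pn n)
        + (1/4 : ℂ) • (Polynomial.X * (if n = 0 then 0 else Pn (n - 1))) = 0)
    (n : ℕ) : (Pn (n + 1)).coeff 0 = 0 := by
  have H := congrArg (fun q : Polynomial ℂ => q.coeff 0) (hPnrec n)
  simp only [Polynomial.coeff_add, Polynomial.coeff_sub, Polynomial.coeff_smul,
    Polynomial.coeff_zero, smul_eq_mul, Polynomial.mul_coeff_zero,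
    Polynomial.coeff_X_zero, Polynomial.coeff_one] at H
  have hne : ((n : ℂ) + 1) * ((n : ℂ) + 2 * k) ≠ 0 := by
    have h1 : ((n : ℂ) + 1) ≠ 0 := Nat.cast_add_one_ne_zero n
    have h2k : n + 2 * k ≠ 0 := by omega
    have h2 : ((n : ℂ) + 2 * k) ≠ 0 := by
      have h3 : ((n + 2 * k : ℕ) : ℂ) ≠ 0 := Nat.cast_ne_zero.mpr h2k
      push_cast at h3
      exact h3
    exact mul_ne_zero h1 h2
  have H2 : ((n : ℂ) + 1) * ((n : ℂ) + 2 * k) * (Pn (n + 1)).coeff 0 = 0 := by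
    rw [← H]; ring_nf; norm_num
  exact (mul_eq_zero.mp H2).resolve_left hne

/-- For all `m, n ≥ 0`: the rational function `h m` is regular at `v = 0` (its Laurent
expansion at `0` has no negative-index coefficients) and its `n`-th Taylor coefficient at
`v = 0` equals `n!(n+2k-1)!/(2k-1)!` times the coefficient of `u^m` in `Pₙ(u)`; i.e. the
identity `∑_{n≥0} (n!(n+2k-1)!/(2k-1)!) Pₙ(u) vⁿ = ∑_{m≥0} h_m(v) u^m` holds
coefficientwise. -/
theorem h_taylor_coeff_general
    (k : ℕ) (hk : 1 ≤ k)
    (P : MvPolynomial (Fin 2) ℂ) (hP : P.IsHomogeneous k)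
    (Pn : ℕ → Polynomial ℂ)
    (hPn0 : Pn 0 = MvPolynomial.aeval ![1, Polynomial.X] P)
    (hPnrec : ∀ n : ℕ,
      (((n : ℂ) + 1) * ((n : ℂ) + 2 * k)) • Pn (n + 1)
        + (X ^ 2 - X) * Polynomial.derivative (Pn n)
        - ((n : ℂ) + k) • (X * Pn n)
        + (1/4 : ℂ) • (X * (if n = 0 then 0 else Pn (n - 1))) = 0)
    (h : ℕ → RatFunc ℂ)
    (hrec : ∀ m : ℕ,
      h m / RatFunc.X - (m : ℂ) • h m
        + ((m : ℂ) - 1 - k) • (if m = 0 then 0 else h (m - 1))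
        - RatFunc.X * ratDeriv (if m = 0 then 0 else h (m - 1))
        + ((2 * (k : ℂ) - 1) / 4) •
            (RatFunc.X * ratDeriv (RatFunc.X * (if m = 0 then 0 else h (m - 1))))
        + (1/4 : ℂ) • (RatFunc.X * ratDeriv (RatFunc.X *
            ratDeriv (RatFunc.X * (if m = 0 then 0 else h (m - 1)))))
      = RatFunc.C ((Pn 0).coeff m) / RatFunc.X)
    (m : ℕ) :
    (∀ i : ℤ, i < 0 → ((h m : LaurentSeries ℂ)).coeff i = 0) ∧
    (∀ n : ℕ, ((h m : LaurentSeries ℂ)).coeff (n : ℤ)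
        = ((Nat.factorial n : ℂ) * (Nat.factorial (n + 2 * k - 1) : ℂ) /
            (Nat.factorial (2 * k - 1) : ℂ)) * (Pn n).coeff m) := by
  induction m with
  | zero =>
    have hr := hrec 0
    simp only [↓reduceIte] at hr
    have EQ := fun j => master (h 0) 0 _ _ _ _ hr j
    have Hc : ∀ i : ℤ, (h 0 : LaurentSeries ℂ).coeff i
        = if i = 0 then (Pn 0).coeff 0 else 0 := by
      intro i
      have e := EQ (i - 1)
      have e2 : i - 1 + 1 = i := by ring
      rw [e2] at e
      simp only [map_zero, HahnSeries.coeff_zero, mul_zero, add_zero, sub_zero,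
        Nat.cast_zero, zero_mul, zero_add] at e
      linear_combination e
    constructor
    · intro i hi
      rw [Hc, if_neg (by omega)]
    · intro n
      rw [Hc]
      cases n with
      | zero =>
        have h1 : ((Nat.factorial 0 : ℂ) * (Nat.factorial (0 + 2 * k - 1) : ℂ) /
            (Nat.factorial (2 * k - 1) : ℂ)) = 1 := cc_zero k
        rw [h1, one_mul, if_pos (by norm_num)]
      | succ t =>
        rw [if_neg (by exact_mod_cast Nat.succ_ne_zero t), Pn_coeff0 k hk Pn hPnrec t, mul_zero]
  | succ m' ih =>
    obtain ⟨Gneg, Gpos0⟩ := ih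
    have Gpos : ∀ n : ℕ, (h m' : LaurentSeries ℂ).coeff (n : ℤ)
        = cc k n * (Pn n).coeff m' := Gpos0
    have hr := hrec (m' + 1)
    simp only [Nat.succ_ne_zero, if_false, Nat.add_sub_cancel] at hr
    have EQ := fun j => master (h (m' + 1)) (h m') _ _ _ _ hr j
    have Hneg : ∀ i : ℤ, i < 0 → (h (m' + 1) : LaurentSeries ℂ).coeff i = 0 := by
      have key : ∀ (t : ℕ) (i : ℤ), i ≤ -1 →
          (h (m' + 1) : LaurentSeries ℂ).coeff i
            = ((m' + 1 : ℕ) : ℂ) ^ t * (h (m' + 1) : LaurentSeries ℂ).coeff (i - t) := by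
        intro t
        induction t with
        | zero => intro i _; simp
        | succ t iht =>
          intro i hi
          have e := EQ (i - 1)
          rw [if_neg (by omega), Gneg (i - 1) (by omega), Gneg (i - 1 - 1) (by omega)] at e
          have e2 : i - 1 + 1 = i := by ring
          rw [e2] at e
          have hstep : (h (m' + 1) : LaurentSeries ℂ).coeff i
              = ((m' + 1 : ℕ) : ℂ) * (h (m' + 1) : LaurentSeries ℂ).coeff (i - 1) := by
            linear_combination e
          rw [hstep, iht (i - 1) (by omega)]
          have e3 : i - 1 - (t : ℤ) = i - ((t + 1 : ℕ) : ℤ) := by push_cast; ring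
          rw [e3]
          push_cast
          ring
      intro i hi
      have hlt : i - (((i - (h (m' + 1) : LaurentSeries ℂ).order).toNat + 1 : ℕ) : ℤ)
          < (h (m' + 1) : LaurentSeries ℂ).order := by
        push_cast
        omega
      rw [key ((i - (h (m' + 1) : LaurentSeries ℂ).order).toNat + 1) i (by omega),
        HahnSeries.coeff_eq_zero_of_lt_order hlt, mul_zero]
    refine ⟨Hneg, ?_⟩
    intro n
    induction n with
    | zero =>
      have e := EQ (-1)
      rw [Gneg (-1) (by norm_num), Gneg (-1 - 1) (by norm_num), Hneg (-1) (by norm_num)] at e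
      norm_num at e
      have h1 : ((Nat.factorial 0 : ℂ) * (Nat.factorial (0 + 2 * k - 1) : ℂ) /
          (Nat.factorial (2 * k - 1) : ℂ)) = 1 := cc_zero k
      rw [Nat.cast_zero, h1, one_mul]
      linear_combination e
    | succ n ihn =>
      have ihn' : (h (m' + 1) : LaurentSeries ℂ).coeff (n : ℤ)
          = cc k n * (Pn n).coeff (m' + 1) := ihn
      have e := EQ (n : ℤ)
      rw [if_neg (by omega), ihn', Gpos n] at e
      show _ = cc k (n + 1) * _
      have cs1 := cc_step k n hk
      cases n with
      | zero =>
        rw [show ((0 : ℕ) : ℤ) - 1 = -1 by norm_num, Gneg (-1) (by norm_num)] at e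
        have hp := hPnrec 0
        simp only [↓reduceIte] at hp
        have PE := PnCoeff (k : ℂ) (Pn 1) (Pn 0) 0 0 m' hp
        simp only [Polynomial.coeff_zero] at PE
        push_cast at e PE cs1 ⊢
        linear_combination e - cc k 0 * PE - ((Pn 1).coeff (m' + 1)) * cs1
      | succ t =>
        have e4 : (((t + 1 : ℕ)) : ℤ) - 1 = (t : ℤ) := by push_cast; ring
        rw [e4, Gpos t] at e
        have hp := hPnrec (t + 1)
        simp only [Nat.succ_ne_zero, if_false, Nat.add_sub_cancel] at hp
        have PE := PnCoeff (k : ℂ) (Pn (t + 1 + 1)) (Pn (t + 1)) (Pn t) (t + 1) m' hp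
        have cs2 := cc_step k t hk
        push_cast at e PE cs1 cs2 ⊢
        linear_combination e - cc k (t + 1) * PE - ((Pn (t + 1 + 1)).coeff (m' + 1)) * cs1
          + (1/4 : ℂ) * ((Pn t).coeff m') * cs2
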